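/- Let X and Y be Banach spaces. If X and Y are almost square (ASQ), then the projective tensor product X ⊗̂π Y is almost square. -/
import Mathlib


open Filter Topology Metric


lemma mem_convexHull_fin {E : Type*} [AddCommGroup E] [Module ℝ E] {s : Set E} {u : E}
    (h : u ∈ convexHull ℝ s) :
    ∃ (n : ℕ) (w : Fin n → ℝ) (p : Fin n → E), (∀ j, 0 ≤ w j) ∧ (∑ j, w j) = 1 ∧
      (∀ j, p j ∈ s) ∧ (∑ j, w j • p j) = u := by
  rw [convexHull_eq] at h
  obtain ⟨ι, t, w, z, hw0, hw1, hzs, hcm⟩ := h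
  refine ⟨t.card, fun j => w (t.equivFin.symm j), fun j => z (t.equivFin.symm j),
    fun j => hw0 _ (t.equivFin.symm j).2, ?_, fun j => hzs _ (t.equivFin.symm j).2, ?_⟩
  · rw [Fintype.sum_equiv t.equivFin.symm _ (fun x : t => w x) (fun j => rfl),
      Finset.sum_coe_sort t w]
    exact hw1
  · rw [Fintype.sum_equiv t.equivFin.symm _ (fun x : t => w x • z x) (fun j => rfl),
      Finset.sum_coe_sort t (fun i => w i • z i), ← Finset.centerMass_eq_of_sum_1 _ _ hw1]
    exact hcm

lemma asq_fintype {X : Type*} [NormedAddCommGroup X] [NormedSpace ℝ X]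
    (hX : ∀ (k : ℕ) (x : Fin k → X), (∀ i, ‖x i‖ = 1) →
      ∃ y : ℕ → X, (∀ n, ‖y n‖ ≤ 1) ∧ Tendsto (fun n => ‖y n‖) atTop (𝓝 1) ∧
        ∀ i, Tendsto (fun n => ‖x i + y n‖) atTop (𝓝 1) ∧
          Tendsto (fun n => ‖x i - y n‖) atTop (𝓝 1))
    {ι : Type*} [Fintype ι] (x : ι → X) (hx : ∀ i, ‖x i‖ = 1) :
    ∃ y : ℕ → X, (∀ n, ‖y n‖ ≤ 1) ∧ Tendsto (fun n => ‖y n‖) atTop (𝓝 1) ∧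
      ∀ i, Tendsto (fun n => ‖x i + y n‖) atTop (𝓝 1) ∧
        Tendsto (fun n => ‖x i - y n‖) atTop (𝓝 1) := by
  obtain ⟨y, hy1, hy2, hy3⟩ := hX (Fintype.card ι) (x ∘ (Fintype.equivFin ι).symm)
    (fun i => hx _)
  exact ⟨y, hy1, hy2, fun i => by simpa using hy3 (Fintype.equivFin ι i)⟩

lemma elem_plus {X Y Z : Type*} [NormedAddCommGroup X] [NormedSpace ℝ X]
    [NormedAddCommGroup Y] [NormedSpace ℝ Y]
    [NormedAddCommGroup Z] [NormedSpace ℝ Z]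
    (φ : X →L[ℝ] Y →L[ℝ] Z) (hcross : ∀ x y, ‖φ x y‖ = ‖x‖ * ‖y‖)
    (x a : X) (y b : Y) (c : ℝ) (hc : 0 ≤ c)
    (h1 : ‖x + a‖ ≤ c) (h2 : ‖x - a‖ ≤ c) (h3 : ‖y + b‖ ≤ c) (h4 : ‖y - b‖ ≤ c) :
    ‖φ x y + φ a b‖ ≤ c * c := by
  have hid : φ x y + φ a b = (2:ℝ)⁻¹ • (φ (x + a) (y + b) + φ (x - a) (y - b)) := by
    simp only [map_add, map_sub, ContinuousLinearMap.add_apply, ContinuousLinearMap.sub_apply]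
    module
  rw [hid, norm_smul]
  have hle := norm_add_le (φ (x + a) (y + b)) (φ (x - a) (y - b))
  rw [hcross, hcross] at hle
  have h5 : ‖x + a‖ * ‖y + b‖ ≤ c * c := mul_le_mul h1 h3 (norm_nonneg _) hc
  have h6 : ‖x - a‖ * ‖y - b‖ ≤ c * c := mul_le_mul h2 h4 (norm_nonneg _) hc
  rw [Real.norm_eq_abs, abs_of_nonneg (by norm_num : (0:ℝ) ≤ (2:ℝ)⁻¹)]
  linarith

lemma key_step {X Y Z : Type*} [NormedAddCommGroup X] [NormedSpace ℝ X]
    [NormedAddCommGroup Y] [NormedSpace ℝ Y]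
    [NormedAddCommGroup Z] [NormedSpace ℝ Z]
    (φ : X →L[ℝ] Y →L[ℝ] Z)
    (hcross : ∀ x y, ‖φ x y‖ = ‖x‖ * ‖y‖)
    (hball : closure (convexHull ℝ {z : Z | ∃ x y, ‖x‖ = 1 ∧ ‖y‖ = 1 ∧ z = φ x y}) =
      closedBall (0 : Z) 1)
    (hX : ∀ (k : ℕ) (x : Fin k → X), (∀ i, ‖x i‖ = 1) →
      ∃ y : ℕ → X, (∀ n, ‖y n‖ ≤ 1) ∧ Tendsto (fun n => ‖y n‖) atTop (𝓝 1) ∧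
        ∀ i, Tendsto (fun n => ‖x i + y n‖) atTop (𝓝 1) ∧
          Tendsto (fun n => ‖x i - y n‖) atTop (𝓝 1))
    (hY : ∀ (k : ℕ) (x : Fin k → Y), (∀ i, ‖x i‖ = 1) →
      ∃ y : ℕ → Y, (∀ n, ‖y n‖ ≤ 1) ∧ Tendsto (fun n => ‖y n‖) atTop (𝓝 1) ∧
        ∀ i, Tendsto (fun n => ‖x i + y n‖) atTop (𝓝 1) ∧
          Tendsto (fun n => ‖x i - y n‖) atTop (𝓝 1))
    (k : ℕ) (z : Fin k → Z) (hz : ∀ i, ‖z i‖ = 1)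
    (ε : ℝ) (hε : 0 < ε) (hε1 : ε ≤ 1) :
    ∃ w : Z, ‖w‖ ≤ 1 ∧ (1 - ε) * (1 - ε) ≤ ‖w‖ ∧
      ∀ i, ‖z i + w‖ ≤ (1 + ε) * (1 + ε) + ε ∧ ‖z i - w‖ ≤ (1 + ε) * (1 + ε) + ε := by
  set S := {z : Z | ∃ x y, ‖x‖ = 1 ∧ ‖y‖ = 1 ∧ z = φ x y} with hS
  have hcl : ∀ i, z i ∈ closure (convexHull ℝ S) := by
    intro i
    rw [hball, mem_closedBall_zero_iff]
    exact (hz i).le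
  choose u hu hud using fun i => Metric.mem_closure_iff.1 (hcl i) ε hε
  choose n w p hw0 hw1 hp hrep using fun i => mem_convexHull_fin (hu i)
  choose xs ys hxs hys hpe using fun i j => hp i j
  obtain ⟨a, ha1, ha2, ha3⟩ := asq_fintype hX
    (fun q : Σ i : Fin k, Fin (n i) => xs q.1 q.2) (fun q => hxs q.1 q.2)
  obtain ⟨b, hb1, hb2, hb3⟩ := asq_fintype hY
    (fun q : Σ i : Fin k, Fin (n i) => ys q.1 q.2) (fun q => hys q.1 q.2)
  have hIoo : Set.Ioo (1 - ε) (1 + ε) ∈ 𝓝 (1:ℝ) := Ioo_mem_nhds (by linarith) (by linarith)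
  have hq : ∀ᶠ m in atTop, ∀ q : Σ i : Fin k, Fin (n i),
      ‖xs q.1 q.2 + a m‖ ≤ 1 + ε ∧ ‖xs q.1 q.2 - a m‖ ≤ 1 + ε ∧
      ‖ys q.1 q.2 + b m‖ ≤ 1 + ε ∧ ‖ys q.1 q.2 - b m‖ ≤ 1 + ε := by
    rw [eventually_all]
    intro q
    have e1 := ((ha3 q).1.eventually hIoo).mono (fun m hm => hm.2.le)
    have e2 := ((ha3 q).2.eventually hIoo).mono (fun m hm => hm.2.le)
    have e3 := ((hb3 q).1.eventually hIoo).mono (fun m hm => hm.2.le)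
    have e4 := ((hb3 q).2.eventually hIoo).mono (fun m hm => hm.2.le)
    exact (e1.and (e2.and (e3.and e4))).mono (fun m hm => ⟨hm.1, hm.2.1, hm.2.2.1, hm.2.2.2⟩)
  obtain ⟨N, hNA, hNB, hNq⟩ := ((ha2.eventually hIoo).and ((hb2.eventually hIoo).and hq)).exists
  set W := φ (a N) (b N) with hW
  have hWn : ‖W‖ = ‖a N‖ * ‖b N‖ := hcross _ _
  have hε0 : (0:ℝ) ≤ 1 - ε := by linarith
  have hc : (0:ℝ) ≤ 1 + ε := by linarith
  refine ⟨W, ?_, ?_, ?_⟩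
  · rw [hWn]
    nlinarith [ha1 N, hb1 N, norm_nonneg (a N), norm_nonneg (b N)]
  · rw [hWn]
    nlinarith [hNA.1, hNB.1]
  · intro i
    have hdist : ‖z i - u i‖ < ε := by
      rw [← dist_eq_norm]; exact hud i
    -- convex combination bound
    have hconv : ∀ (v : Fin (n i) → Z), (∀ j, ‖v j‖ ≤ (1 + ε) * (1 + ε)) →
        ‖∑ j, w i j • v j‖ ≤ (1 + ε) * (1 + ε) := by
      intro v hv
      calc ‖∑ j, w i j • v j‖ ≤ ∑ j, ‖w i j • v j‖ := norm_sum_le _ _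
        _ = ∑ j, w i j * ‖v j‖ := by
            refine Finset.sum_congr rfl (fun j _ => ?_)
            rw [norm_smul, Real.norm_eq_abs, abs_of_nonneg (hw0 i j)]
        _ ≤ ∑ j, w i j * ((1 + ε) * (1 + ε)) :=
            Finset.sum_le_sum (fun j _ => mul_le_mul_of_nonneg_left (hv j) (hw0 i j))
        _ = (1 + ε) * (1 + ε) := by rw [← Finset.sum_mul, hw1 i, one_mul]
    have helem : ∀ j : Fin (n i), ‖φ (xs i j) (ys i j) + W‖ ≤ (1 + ε) * (1 + ε) := by
      intro j
      obtain ⟨q1, q2, q3, q4⟩ := hNq ⟨i, j⟩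
      exact elem_plus φ hcross _ _ _ _ _ hc q1 q2 q3 q4
    have helem' : ∀ j : Fin (n i), ‖φ (xs i j) (ys i j) - W‖ ≤ (1 + ε) * (1 + ε) := by
      intro j
      obtain ⟨q1, q2, q3, q4⟩ := hNq ⟨i, j⟩
      have : φ (xs i j) (ys i j) - W = φ (xs i j) (ys i j) + φ (a N) (-(b N)) := by
        rw [map_neg, hW]; abel
      rw [this]
      refine elem_plus φ hcross _ _ _ _ _ hc q1 q2 ?_ ?_
      · rw [← sub_eq_add_neg]; exact q4
      · rw [sub_neg_eq_add]; exact q3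
    have hup : u i + W = ∑ j, w i j • (φ (xs i j) (ys i j) + W) := by
      have : ∑ j, w i j • (φ (xs i j) (ys i j) + W)
          = (∑ j, w i j • φ (xs i j) (ys i j)) + (∑ j, w i j) • W := by
        rw [Finset.sum_smul]
        rw [← Finset.sum_add_distrib]
        exact Finset.sum_congr rfl (fun j _ => by rw [smul_add])
      rw [this, hw1 i, one_smul]
      congr 1
      rw [← hrep i]
      exact Finset.sum_congr rfl (fun j _ => by rw [hpe i j])
    have hum : u i - W = ∑ j, w i j • (φ (xs i j) (ys i j) - W) := by
      have : ∑ j, w i j • (φ (xs i j) (ys i j) - W)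
          = (∑ j, w i j • φ (xs i j) (ys i j)) - (∑ j, w i j) • W := by
        rw [Finset.sum_smul]
        rw [← Finset.sum_sub_distrib]
        exact Finset.sum_congr rfl (fun j _ => by rw [smul_sub])
      rw [this, hw1 i, one_smul]
      congr 1
      rw [← hrep i]
      exact Finset.sum_congr rfl (fun j _ => by rw [hpe i j])
    constructor
    · calc ‖z i + W‖ = ‖(z i - u i) + (u i + W)‖ := by congr 1; abel
        _ ≤ ‖z i - u i‖ + ‖u i + W‖ := norm_add_le _ _
        _ ≤ ε + (1 + ε) * (1 + ε) := by
            refine add_le_add hdist.le ?_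
            rw [hup]; exact hconv _ helem
        _ = (1 + ε) * (1 + ε) + ε := by ring
    · calc ‖z i - W‖ = ‖(z i - u i) + (u i - W)‖ := by congr 1; abel
        _ ≤ ‖z i - u i‖ + ‖u i - W‖ := norm_add_le _ _
        _ ≤ ε + (1 + ε) * (1 + ε) := by
            refine add_le_add hdist.le ?_
            rw [hum]; exact hconv _ helem'
        _ = (1 + ε) * (1 + ε) + ε := by ring

def ASQ (X : Type*) [NormedAddCommGroup X] [NormedSpace ℝ X] : Prop :=
  ∀ (k : ℕ) (x : Fin k → X), (∀ i, ‖x i‖ = 1) →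
    ∃ y : ℕ → X, (∀ n, ‖y n‖ ≤ 1) ∧ Tendsto (fun n => ‖y n‖) atTop (𝓝 1) ∧
      ∀ i, Tendsto (fun n => ‖x i + y n‖) atTop (𝓝 1) ∧
        Tendsto (fun n => ‖x i - y n‖) atTop (𝓝 1)

theorem stmt2 {X Y Z : Type*} [NormedAddCommGroup X] [NormedSpace ℝ X] [CompleteSpace X]
    [NormedAddCommGroup Y] [NormedSpace ℝ Y] [CompleteSpace Y]
    [NormedAddCommGroup Z] [NormedSpace ℝ Z] [CompleteSpace Z]
    (φ : X →L[ℝ] Y →L[ℝ] Z)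
    (hcross : ∀ x y, ‖φ x y‖ = ‖x‖ * ‖y‖)
    (hball : closure (convexHull ℝ {z : Z | ∃ x y, ‖x‖ = 1 ∧ ‖y‖ = 1 ∧ z = φ x y}) =
      closedBall (0 : Z) 1)
    (hX : ASQ X) (hY : ASQ Y) : ASQ Z := by
  intro k z hz
  set δ : ℕ → ℝ := fun m => 1 / (m + 1) with hδdef
  have hδpos : ∀ m, 0 < δ m := fun m => by positivity
  have hδ1 : ∀ m, δ m ≤ 1 := fun m => by
    rw [hδdef]
    rw [div_le_one (by positivity)]
    exact le_add_of_nonneg_left (Nat.cast_nonneg m)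
  have hδ0 : Tendsto δ atTop (𝓝 0) := tendsto_one_div_add_atTop_nhds_zero_nat
  choose w hw1 hw2 hw3 using fun m =>
    key_step φ hcross hball hX hY k z hz (δ m) (hδpos m) (hδ1 m)
  have h1p : Tendsto (fun m => (1:ℝ) + δ m) atTop (𝓝 (1 + 0)) :=
    tendsto_const_nhds.add hδ0
  have h1m : Tendsto (fun m => (1:ℝ) - δ m) atTop (𝓝 (1 - 0)) :=
    tendsto_const_nhds.sub hδ0
  have hU : Tendsto (fun m => (1 + δ m) * (1 + δ m) + δ m) atTop (𝓝 1) := by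
    have := (h1p.mul h1p).add hδ0
    norm_num at this
    exact this
  refine ⟨w, hw1, ?_, ?_⟩
  · have hL : Tendsto (fun m => (1 - δ m) * (1 - δ m)) atTop (𝓝 1) := by
      have := h1m.mul h1m
      norm_num at this
      exact this
    exact tendsto_of_tendsto_of_tendsto_of_le_of_le hL tendsto_const_nhds hw2
      (fun m => hw1 m)
  · intro i
    have hLo : Tendsto (fun m => 2 - ((1 + δ m) * (1 + δ m) + δ m)) atTop (𝓝 1) := by
      have h2 : Tendsto (fun _ : ℕ => (2:ℝ)) atTop (𝓝 2) := tendsto_const_nhds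
      have := h2.sub hU
      norm_num at this
      exact this
    have htwo : ∀ m, (2:ℝ) ≤ ‖z i + w m‖ + ‖z i - w m‖ := by
      intro m
      have h1 : (z i + w m) + (z i - w m) = (2:ℝ) • z i := by
        rw [two_smul]; abel
      have h2 : ‖(2:ℝ) • z i‖ = 2 := by
        rw [norm_smul, hz i]; norm_num
      calc (2:ℝ) = ‖(z i + w m) + (z i - w m)‖ := by rw [h1, h2]
        _ ≤ ‖z i + w m‖ + ‖z i - w m‖ := norm_add_le _ _
    constructor
    · refine tendsto_of_tendsto_of_tendsto_of_le_of_le hLo hU (fun m => ?_) (fun m => (hw3 m i).1)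
      have := (hw3 m i).2
      have := htwo m
      linarith
    · refine tendsto_of_tendsto_of_tendsto_of_le_of_le hLo hU (fun m => ?_) (fun m => (hw3 m i).2)
      have := (hw3 m i).1
      have := htwo m
      linarith
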